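/- For every real number k with 0 ≤ k < 1, the complete elliptic integral of the first kind satisfies K(k) = (π/2) · ∑_{n=0}^∞ ((2n choose n)/4ⁿ)² k^{2n}; that is, K(k) = (π/2) · F(k²). -/

import Mathlib

open Real

/-- Complete elliptic integral of the first kind. -/
noncomputable def K (k : ℝ) : ℝ :=
  ∫ θ in (0:ℝ)..(π / 2), 1 / Real.sqrt (1 - k ^ 2 * Real.sin θ ^ 2)

/-- Ramanujan's hypergeometric series `F(α) = ∑ ((2n choose n)/4ⁿ)² αⁿ`. -/
noncomputable def F (α : ℝ) : ℝ :=
  ∑' n : ℕ, ((Nat.choose (2 * n) n : ℝ) / 4 ^ n) ^ 2 * α ^ n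

open Real MeasureTheory Topology Filter

section Aux

noncomputable def a (n : ℕ) : ℝ := (Nat.choose (2 * n) n : ℝ) / 4 ^ n

lemma a_nonneg (n : ℕ) : 0 ≤ a n := by unfold a; positivity

lemma choose_le_four_pow (n : ℕ) : Nat.choose (2 * n) n ≤ 4 ^ n := by
  calc Nat.choose (2 * n) n ≤ ∑ i ∈ Finset.range (2 * n + 1), Nat.choose (2 * n) i :=
        Finset.single_le_sum (fun i _ => Nat.zero_le _) (by simp [Nat.lt_succ_iff]; omega)
    _ = 2 ^ (2 * n) := Nat.sum_range_choose (2 * n)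
    _ = 4 ^ n := by rw [pow_mul]; norm_num

lemma a_le_one (n : ℕ) : a n ≤ 1 := by
  rw [a, div_le_one (by positivity)]
  exact_mod_cast by exact_mod_cast (choose_le_four_pow n : (Nat.choose (2*n) n : ℕ) ≤ 4 ^ n)

lemma a_succ (n : ℕ) : a (n + 1) = (2 * n + 1) / (2 * n + 2) * a n := by
  have h := Nat.succ_mul_centralBinom_succ n
  simp only [Nat.centralBinom] at h
  have h' : ((n + 1 : ℕ) : ℝ) * (Nat.choose (2 * (n+1)) (n+1) : ℝ)
      = 2 * (2 * n + 1) * (Nat.choose (2 * n) n : ℝ) := by exact_mod_cast congrArg Nat.cast h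
  simp only [a]
  rw [pow_succ]
  field_simp
  push_cast at h'
  linear_combination 2 * h'

lemma wallis (n : ℕ) : ∫ θ in (0:ℝ)..(π/2), Real.sin θ ^ (2 * n) = π / 2 * a n := by
  induction n with
  | zero => simp [a]
  | succ n ih =>
    have h2 : 2 * (n + 1) = 2 * n + 2 := by ring
    rw [h2, integral_sin_pow (2 * n), ih, a_succ]
    simp [Real.cos_pi_div_two, Real.sin_zero]
    ring


lemma geom_int {x : ℝ} (hx0 : 0 ≤ x) (hx1 : x < 1) :
    ∫ θ in (0:ℝ)..(π/2), 1 / (1 - x * Real.sin θ ^ 2) = π / (2 * Real.sqrt (1 - x)) := by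
  set c := Real.sqrt (1 - x) with hc
  have hc0 : 0 < c := Real.sqrt_pos.mpr (by linarith)
  have hc2 : c ^ 2 = 1 - x := Real.sq_sqrt (by linarith)
  have hpos : ∀ θ : ℝ, 0 < 1 - x * Real.sin θ ^ 2 := by
    intro θ
    nlinarith [Real.sin_sq_le_one θ, sq_nonneg (Real.sin θ)]
  have hcont : Continuous fun θ : ℝ => 1 / (1 - x * Real.sin θ ^ 2) := by
    apply Continuous.div continuous_const
    · continuity
    · intro θ; exact (hpos θ).ne'
  -- primitive
  set φ : ℝ → ℝ := fun θ => Real.arctan (c * Real.tan θ) / c with hφ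
  have hderiv : ∀ θ ∈ Set.Ico (0:ℝ) (π/2), HasDerivAt φ (1 / (1 - x * Real.sin θ ^ 2)) θ := by
    intro θ hθ
    have hcos : Real.cos θ ≠ 0 :=
      (Real.cos_pos_of_mem_Ioo ⟨by linarith [hθ.1, Real.pi_pos], hθ.2⟩).ne'
    have h1 : HasDerivAt (fun θ => c * Real.tan θ) (c * (1 / Real.cos θ ^ 2)) θ :=
      (Real.hasDerivAt_tan hcos).const_mul c
    have h2 := (Real.hasDerivAt_arctan (c * Real.tan θ)).comp θ h1
    have h3 := h2.div_const c
    refine h3.congr_deriv ?_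
    symm
    rw [Real.tan_eq_sin_div_cos]
    have hcos2 : Real.cos θ ^ 2 ≠ 0 := pow_ne_zero _ hcos
    field_simp
    have key : Real.cos θ ^ 2 + (c * Real.sin θ) ^ 2 = 1 - x * Real.sin θ ^ 2 := by
      nlinarith [Real.sin_sq_add_cos_sq θ]
    rw [show Real.cos θ ^ 2 + Real.sin θ ^ 2 * c ^ 2 = 1 - x * Real.sin θ ^ 2 by rw [← key]; ring]
    exact div_self (hpos θ).ne'
  -- FTC on [0, b] for b < π/2
  have hFTC : ∀ b ∈ Set.Ico (0:ℝ) (π/2),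
      ∫ θ in (0:ℝ)..b, 1 / (1 - x * Real.sin θ ^ 2) = Real.arctan (c * Real.tan b) / c := by
    intro b hb
    have : ∫ θ in (0:ℝ)..b, 1 / (1 - x * Real.sin θ ^ 2) = φ b - φ 0 := by
      apply intervalIntegral.integral_eq_sub_of_hasDerivAt
      · intro θ hθ
        rw [Set.uIcc_of_le hb.1] at hθ
        exact hderiv θ ⟨hθ.1, lt_of_le_of_lt hθ.2 hb.2⟩
      · exact (hcont.intervalIntegrable 0 b)
    rw [this]
    simp [hφ, Real.tan_zero, Real.arctan_zero]
  -- limit as b → π/2 from the left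
  have hne : (𝓝[<] (π/2)).NeBot := nhdsLT_neBot _
  have hlim1 : Filter.Tendsto (fun b => ∫ θ in (0:ℝ)..b, 1 / (1 - x * Real.sin θ ^ 2))
      (nhdsWithin (π/2) (Set.Iio (π/2))) (nhds (∫ θ in (0:ℝ)..(π/2), 1 / (1 - x * Real.sin θ ^ 2))) := by
    have : Continuous (fun b => ∫ θ in (0:ℝ)..b, 1 / (1 - x * Real.sin θ ^ 2)) :=
      intervalIntegral.continuous_primitive (fun a' b' => hcont.intervalIntegrable a' b') 0
    exact this.continuousAt.continuousWithinAt
  have hlim2 : Filter.Tendsto (fun b => Real.arctan (c * Real.tan b) / c)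
      (nhdsWithin (π/2) (Set.Iio (π/2))) (nhds (π / (2 * c))) := by
    have h1 : Filter.Tendsto (fun b => c * Real.tan b) (nhdsWithin (π/2) (Set.Iio (π/2))) Filter.atTop :=
      Real.tendsto_tan_pi_div_two.const_mul_atTop hc0
    have h2 : Filter.Tendsto (fun b => Real.arctan (c * Real.tan b))
        (nhdsWithin (π/2) (Set.Iio (π/2))) (nhds (π/2)) :=
      (Real.tendsto_arctan_atTop.mono_right nhdsWithin_le_nhds).comp h1
    have := h2.div_const c
    rwa [div_div] at this
  have heq : (fun b => ∫ θ in (0:ℝ)..b, 1 / (1 - x * Real.sin θ ^ 2)) =ᶠ[nhdsWithin (π/2) (Set.Iio (π/2))]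
      (fun b => Real.arctan (c * Real.tan b) / c) := by
    filter_upwards [Ioo_mem_nhdsLT (show (0:ℝ) < π/2 by positivity)]
      with b hb
    exact hFTC b ⟨le_of_lt hb.1, hb.2⟩
  exact tendsto_nhds_unique (hlim1.congr' heq) hlim2

lemma pi2_pos : (0:ℝ) < π / 2 := by positivity

lemma wallis' (n : ℕ) :
    ∫ θ in Set.Ioc (0:ℝ) (π/2), Real.sin θ ^ (2 * n) = π / 2 * a n := by
  rw [← intervalIntegral.integral_of_le pi2_pos.le]; exact wallis n

lemma geom_int' {x : ℝ} (hx0 : 0 ≤ x) (hx1 : x < 1) :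
    ∫ θ in Set.Ioc (0:ℝ) (π/2), 1 / (1 - x * Real.sin θ ^ 2) = π / (2 * Real.sqrt (1 - x)) := by
  rw [← intervalIntegral.integral_of_le pi2_pos.le]; exact geom_int hx0 hx1

lemma integral_norm_pow (n : ℕ) (c : ℝ) (hc : 0 ≤ c) :
    ∫ θ in Set.Ioc (0:ℝ) (π/2), ‖c * Real.sin θ ^ (2*n)‖ = c * (π / 2 * a n) := by
  have hnn : ∀ θ : ℝ, ‖c * Real.sin θ ^ (2*n)‖ = c * Real.sin θ ^ (2*n) := by
    intro θ
    rw [Real.norm_eq_abs, abs_of_nonneg]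
    apply mul_nonneg hc
    rw [pow_mul]; positivity
  simp_rw [hnn]
  rw [MeasureTheory.integral_const_mul, wallis' n]

lemma int_pow (n : ℕ) (c : ℝ) :
    IntegrableOn (fun θ => c * Real.sin θ ^ (2*n)) (Set.Ioc (0:ℝ) (π/2)) := by
  apply Continuous.integrableOn_Ioc
  continuity

lemma sum_sqrt {x : ℝ} (hx0 : 0 ≤ x) (hx1 : x < 1) :
    HasSum (fun n => a n * x ^ n) (1 / Real.sqrt (1 - x)) := by
  have hπ : (π:ℝ) ≠ 0 := ne_of_gt pi_pos
  have hkey : HasSum (fun n : ℕ => ∫ θ in Set.Ioc (0:ℝ) (π/2), x ^ n * Real.sin θ ^ (2*n))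
      (∫ θ in Set.Ioc (0:ℝ) (π/2), ∑' n : ℕ, x ^ n * Real.sin θ ^ (2*n)) := by
    apply MeasureTheory.hasSum_integral_of_summable_integral_norm
    · intro n; exact int_pow n (x ^ n)
    · apply Summable.of_nonneg_of_le
        (f := fun n : ℕ => π / 2 * x ^ n)
      · intro n; exact MeasureTheory.integral_nonneg fun θ => norm_nonneg _
      · intro n
        rw [integral_norm_pow n _ (by positivity)]
        have := a_le_one n
        have := a_nonneg n
        have : x ^ n * (π/2 * a n) ≤ x ^ n * (π/2 * 1) := by
          apply mul_le_mul_of_nonneg_left _ (by positivity)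
          have := pi2_pos; nlinarith
        linarith [this]
      · exact (summable_geometric_of_lt_one hx0 hx1).mul_left _
  have hpt : ∀ θ : ℝ, ∑' n : ℕ, x ^ n * Real.sin θ ^ (2*n) = 1 / (1 - x * Real.sin θ ^ 2) := by
    intro θ
    have hr0 : 0 ≤ x * Real.sin θ ^ 2 := by positivity
    have hr1 : x * Real.sin θ ^ 2 < 1 :=
      lt_of_le_of_lt (by nlinarith [Real.sin_sq_le_one θ]) hx1
    have := tsum_geometric_of_lt_one hr0 hr1
    rw [one_div, ← this]
    congr 1
    funext n
    rw [mul_pow, ← pow_mul, mul_comm 2 n]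
  have hfun1 : (fun θ : ℝ => ∑' n : ℕ, x ^ n * Real.sin θ ^ (2*n))
      = fun θ => 1 / (1 - x * Real.sin θ ^ 2) := funext hpt
  rw [hfun1, geom_int' hx0 hx1] at hkey
  have hint : ∀ n : ℕ, ∫ θ in Set.Ioc (0:ℝ) (π/2), x ^ n * Real.sin θ ^ (2*n)
      = x ^ n * (π / 2 * a n) := by
    intro n; rw [MeasureTheory.integral_const_mul, wallis' n]
  simp_rw [hint] at hkey
  have h2 := hkey.mul_left (2/π)
  have hfun : (fun n => (2/π) * (x^n * (π/2 * a n))) = fun n => a n * x ^ n := by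
    funext n; field_simp
  have hval : (2/π) * (π/(2*Real.sqrt (1-x))) = 1/Real.sqrt (1-x) := by
    have hs : Real.sqrt (1-x) ≠ 0 := ne_of_gt (Real.sqrt_pos.mpr (by linarith))
    field_simp
  rw [hfun, hval] at h2
  exact h2


end Aux



theorem ellipticK_eq_series (k : ℝ) (h0 : 0 ≤ k) (h1 : k < 1) :
    K k = π / 2 * ∑' n : ℕ, ((Nat.choose (2 * n) n : ℝ) / 4 ^ n) ^ 2 * k ^ (2 * n) ∧
    K k = π / 2 * F (k ^ 2) := by
  have hk0 : (0:ℝ) ≤ k ^ 2 := by positivity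
  have hk1 : k ^ 2 < 1 := by nlinarith
  -- pointwise expansion
  have hpt : ∀ θ : ℝ, HasSum (fun n : ℕ => a n * (k ^ 2) ^ n * Real.sin θ ^ (2 * n))
      (1 / Real.sqrt (1 - k ^ 2 * Real.sin θ ^ 2)) := by
    intro θ
    have hx0 : 0 ≤ k ^ 2 * Real.sin θ ^ 2 := by positivity
    have hx1 : k ^ 2 * Real.sin θ ^ 2 < 1 :=
      lt_of_le_of_lt (by nlinarith [Real.sin_sq_le_one θ]) hk1
    have hs := sum_sqrt hx0 hx1
    have heq : (fun n : ℕ => a n * (k ^ 2 * Real.sin θ ^ 2) ^ n)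
        = fun n : ℕ => a n * (k ^ 2) ^ n * Real.sin θ ^ (2 * n) := by
      funext n; ring
    rwa [heq] at hs
  have hkey : HasSum
      (fun n : ℕ => ∫ θ in Set.Ioc (0:ℝ) (π/2), (a n * (k ^ 2) ^ n) * Real.sin θ ^ (2 * n))
      (∫ θ in Set.Ioc (0:ℝ) (π/2),
        ∑' n : ℕ, (a n * (k ^ 2) ^ n) * Real.sin θ ^ (2 * n)) := by
    apply MeasureTheory.hasSum_integral_of_summable_integral_norm
    · intro n; exact int_pow n _
    · apply Summable.of_nonneg_of_le (f := fun n : ℕ => π / 2 * (k ^ 2) ^ n)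
      · intro n; exact MeasureTheory.integral_nonneg fun θ => norm_nonneg _
      · intro n
        rw [integral_norm_pow n _ (mul_nonneg (a_nonneg n) (by positivity))]
        have h1 := a_le_one n
        have h2 := a_nonneg n
        have h3 := pi2_pos
        have h4 : (0:ℝ) ≤ (k^2)^n := by positivity
        have h5 : a n ^ 2 ≤ 1 := by nlinarith
        have h6 : π/2 * (k^2)^n * (a n ^ 2) ≤ π/2 * (k^2)^n * 1 :=
          mul_le_mul_of_nonneg_left h5 (by positivity)
        nlinarith [h6]
      · exact (summable_geometric_of_lt_one hk0 hk1).mul_left _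
  have hfun1 : (fun θ : ℝ => ∑' n : ℕ, (a n * (k ^ 2) ^ n) * Real.sin θ ^ (2 * n))
      = fun θ => 1 / Real.sqrt (1 - k ^ 2 * Real.sin θ ^ 2) := by
    funext θ; exact (hpt θ).tsum_eq
  rw [hfun1] at hkey
  have hint : ∀ n : ℕ, (∫ θ in Set.Ioc (0:ℝ) (π/2), (a n * (k ^ 2) ^ n) * Real.sin θ ^ (2 * n))
      = π / 2 * (a n ^ 2 * (k ^ 2) ^ n) := by
    intro n
    rw [MeasureTheory.integral_const_mul, wallis' n]
    ring
  simp_rw [hint] at hkey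
  have hK : K k = ∫ θ in Set.Ioc (0:ℝ) (π/2), 1 / Real.sqrt (1 - k ^ 2 * Real.sin θ ^ 2) := by
    rw [K, intervalIntegral.integral_of_le pi2_pos.le]
  have hKsum : K k = π / 2 * ∑' n : ℕ, a n ^ 2 * (k ^ 2) ^ n := by
    rw [hK, ← hkey.tsum_eq, tsum_mul_left]
  constructor
  · rw [hKsum]
    congr 1
    exact tsum_congr fun n => by rw [a, pow_mul]
  · rw [hKsum, F]
    congr 1
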